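/- Under the nondegeneracy, boundedness, and separability assumptions, run the optimality-driven perceptron algorithm on T samples D_1,...,D_T drawn i.i.d. from P, producing iterates Θ_1,...,Θ_{T+1} and decisions x_t that are optimal solutions of LP(Θ_t z_t, A_t, b_t). Then the number of time steps at which the algorithm's decision differs from the true optimal solution is bounded independently of T: #{t ∈ {1,...,T} : x*_t ≠ x_t} ≤ Θ̄² + σ̄²Θ̄²m²n, where x*_t is the optimal solution of LP(c_t, A_t, b_t). -/

import Mathlib

open MeasureTheory Matrix Finset

namespace MOMPaper

variable {n m d : ℕ}

/-- A point is feasible for the standard-form LP min cᵀx s.t. Ax = b, x ≥ 0. -/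
def Feasible (A : Matrix (Fin m) (Fin n) ℝ) (b : Fin m → ℝ) (x : Fin n → ℝ) : Prop :=
  A.mulVec x = b ∧ ∀ i, 0 ≤ x i

/-- x is an optimal solution of LP(c,A,b). -/
def IsOptimal (c : Fin n → ℝ) (A : Matrix (Fin m) (Fin n) ℝ) (b : Fin m → ℝ)
    (x : Fin n → ℝ) : Prop :=
  Feasible A b x ∧ ∀ y, Feasible A b y → c ⬝ᵥ x ≤ c ⬝ᵥ y

/-- Column submatrix A_B, where the basis B is given by an enumeration β : Fin m → Fin n. -/
def subCols (A : Matrix (Fin m) (Fin n) ℝ) (β : Fin m → Fin n) : Matrix (Fin m) (Fin m) ℝ :=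
  A.submatrix id β

/-- Reduced cost vector r = c − Aᵀ (A_B⁻¹)ᵀ c_B. -/
noncomputable def reducedCost (c : Fin n → ℝ) (A : Matrix (Fin m) (Fin n) ℝ)
    (β : Fin m → Fin n) : Fin n → ℝ :=
  c - (Aᵀ).mulVec ((((subCols A β)⁻¹)ᵀ).mulVec (c ∘ β))

/-- Euclidean norm of a vector. -/
noncomputable def l2norm {ι : Type*} [Fintype ι] (x : ι → ℝ) : ℝ :=
  Real.sqrt (∑ i, x i ^ 2)

/-- Frobenius norm of a matrix. -/
noncomputable def frob {ι κ : Type*} [Fintype ι] [Fintype κ] (M : Matrix ι κ ℝ) : ℝ :=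
  Real.sqrt (∑ i, ∑ j, M i j ^ 2)

/-- Largest singular value of a square matrix, i.e. its ℓ²-operator norm. -/
noncomputable def sigmaMax {ι : Type*} [Fintype ι] [DecidableEq ι]
    (M : Matrix ι ι ℝ) : ℝ :=
  ‖Matrix.toEuclideanCLM (𝕜 := ℝ) M‖

/-- A data sample D = (c, A, b, z). -/
abbrev Samp (n m d : ℕ) : Type :=
  (Fin n → ℝ) × (Fin m → Fin n → ℝ) × (Fin m → ℝ) × (Fin d → ℝ)

def cOf (D : Samp n m d) : Fin n → ℝ := D.1
def AOf (D : Samp n m d) : Matrix (Fin m) (Fin n) ℝ := Matrix.of D.2.1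
def bOf (D : Samp n m d) : Fin m → ℝ := D.2.2.1
def zOf (D : Samp n m d) : Fin d → ℝ := D.2.2.2

/-- Indices of positive coordinates: the optimal basis B* of x*. -/
noncomputable def posSupport (x : Fin n → ℝ) : Finset (Fin n) :=
  Finset.univ.filter (fun i => 0 < x i)

/-- Canonical (increasing) enumeration of a finset of cardinality m. -/
noncomputable def enumOf [NeZero n] (B : Finset (Fin n)) : Fin m → Fin n :=
  if h : B.card = m then B.orderEmbOfFin h else
    fun _ => ⟨0, Nat.pos_of_ne_zero (NeZero.ne n)⟩

/-- Nondegeneracy of the sample D, whose unique optimal solution is xs. -/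
def Nondeg (D : Samp n m d) (xs : Fin n → ℝ) : Prop :=
  IsOptimal (cOf D) (AOf D) (bOf D) xs ∧
  (∀ y, IsOptimal (cOf D) (AOf D) (bOf D) y → y = xs) ∧
  (∀ γ : Fin m → Fin n, Function.Injective γ → IsUnit (subCols (AOf D) γ).det) ∧
  (posSupport xs).card = m

/-- Boundedness of the sample D (with optimal solution xs), with constant σ̄. -/
noncomputable def BoundedD [NeZero n] (σb : ℝ) (D : Samp n m d) (xs : Fin n → ℝ) : Prop :=
  sigmaMax ((subCols (AOf D) (enumOf (posSupport xs)))⁻¹) ≤ σb ∧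
  l2norm (zOf D) ≤ 1 ∧
  (∀ i j, |AOf D i j| ≤ 1) ∧ (∀ i, |bOf D i| ≤ 1) ∧ (∀ i, |cOf D i| ≤ 1) ∧
  (∀ x, Feasible (AOf D) (bOf D) x → l2norm x ≤ 1)

/-- Margin-violation loss l(D;Θ) = Σ_{i ∈ N*} max(1 − r̂_i, 0), where r̂ is the
    reduced cost of ĉ = Θz at the optimal basis B* of xs. -/
noncomputable def mloss [NeZero n] (Θ : Matrix (Fin n) (Fin d) ℝ) (D : Samp n m d)
    (xs : Fin n → ℝ) : ℝ :=
  ∑ i ∈ Finset.univ \ posSupport xs,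
    max (1 - reducedCost (Θ.mulVec (zOf D)) (AOf D) (enumOf (posSupport xs)) i) 0

/-- The MOM objective (λ/2)‖Θ‖_F² + (1/T) Σ_t l(D_t;Θ). -/
noncomputable def momObj [NeZero n] (lam : ℝ) (T : ℕ) (Ds : Fin T → Samp n m d)
    (xstar : Samp n m d → Fin n → ℝ) (Θ : Matrix (Fin n) (Fin d) ℝ) : ℝ :=
  lam / 2 * (frob Θ) ^ 2 + (1 / (T : ℝ)) * ∑ t, mloss Θ (Ds t) (xstar (Ds t))

/-- The event (on a new sample D) that xs(D) is the unique optimal solution of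
    LP(ĉ, A, b) with predicted objective ĉ = Θ z, i.e. "x*_new = x̂_new". -/
def PredictsOpt (Θ : Matrix (Fin n) (Fin d) ℝ) (D : Samp n m d) (xs : Fin n → ℝ) : Prop :=
  IsOptimal (Θ.mulVec (zOf D)) (AOf D) (bOf D) xs ∧
  ∀ y, IsOptimal (Θ.mulVec (zOf D)) (AOf D) (bOf D) y → y = xs

/-- The perceptron update matrix W_{t,i}: row i is zᵀ, rows indexed by B* form the
    block −(A_{B*}⁻¹ A_{·i}) zᵀ, and all other rows are zero. -/
noncomputable def percW (D : Samp n m d) (β : Fin m → Fin n) (i : Fin n) :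
    Matrix (Fin n) (Fin d) ℝ :=
  Matrix.of fun i' j =>
    if i' = i then zOf D j
    else if h : ∃ k, β k = i' then
      -(((subCols (AOf D) β)⁻¹.mulVec (fun k => AOf D k i)) h.choose) * zOf D j
    else 0

/-- The inner loop of the optimality-driven perceptron: for each i ∈ N* in order,
    if the reduced cost r^(i)_i of the current Θ_tmp at B* is ≤ 1/2, add W_{t,i}. -/
noncomputable def percInner [NeZero n] (D : Samp n m d) (xs : Fin n → ℝ)
    (Θ : Matrix (Fin n) (Fin d) ℝ) : Matrix (Fin n) (Fin d) ℝ :=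
  (List.finRange n).foldl
    (fun Θtmp i =>
      if i ∉ posSupport xs ∧
          reducedCost (Θtmp.mulVec (zOf D)) (AOf D) (enumOf (posSupport xs)) i ≤ 1 / 2
      then Θtmp + percW D (enumOf (posSupport xs)) i
      else Θtmp) Θ

/-- Iterates of the optimality-driven perceptron (Algorithm 3): Θ_1 = 0 and
    Θ_{t+1} is obtained from Θ_t by the inner loop on sample D_t;
    here `percIter xstar Ds t` is Θ_{t+1}. -/
noncomputable def percIter [NeZero n] (xstar : Samp n m d → Fin n → ℝ)
    {T : ℕ} (Ds : Fin T → Samp n m d) : ℕ → Matrix (Fin n) (Fin d) ℝ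
  | 0 => 0
  | t + 1 =>
    if h : t < T then
      percInner (Ds ⟨t, h⟩) (xstar (Ds ⟨t, h⟩)) (percIter xstar Ds t)
    else percIter xstar Ds t

noncomputable def ip (Θ Φ : Matrix (Fin n) (Fin d) ℝ) : ℝ := ∑ i, ∑ j, Θ i j * Φ i j
noncomputable def F2 (Θ : Matrix (Fin n) (Fin d) ℝ) : ℝ := ∑ i, ∑ j, Θ i j ^ 2

lemma ip_add_right (Θ Φ Ψ : Matrix (Fin n) (Fin d) ℝ) : ip Θ (Φ + Ψ) = ip Θ Φ + ip Θ Ψ := by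
  simp [ip, mul_add, Finset.sum_add_distrib]

lemma F2_add (Θ Φ : Matrix (Fin n) (Fin d) ℝ) : F2 (Θ + Φ) = F2 Θ + 2 * ip Θ Φ + F2 Φ := by
  simp only [F2, ip, Matrix.add_apply, Finset.mul_sum]
  rw [← Finset.sum_add_distrib, ← Finset.sum_add_distrib]
  refine Finset.sum_congr rfl fun i _ => ?_
  rw [← Finset.sum_add_distrib, ← Finset.sum_add_distrib]
  refine Finset.sum_congr rfl fun j _ => by ring

lemma F2_nonneg (Θ : Matrix (Fin n) (Fin d) ℝ) : 0 ≤ F2 Θ :=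
  Finset.sum_nonneg fun i _ => Finset.sum_nonneg fun j _ => sq_nonneg _

lemma ip_sq_le (Θ Φ : Matrix (Fin n) (Fin d) ℝ) : (ip Θ Φ) ^ 2 ≤ F2 Θ * F2 Φ := by
  have h := Finset.sum_mul_sq_le_sq_mul_sq (Finset.univ : Finset (Fin n × Fin d))
    (fun p => Θ p.1 p.2) (fun p => Φ p.1 p.2)
  simp only [ip, F2, ← Finset.sum_product', Finset.univ_product_univ]
  exact h

lemma frob_sq (Θ : Matrix (Fin n) (Fin d) ℝ) : (frob Θ) ^ 2 = F2 Θ :=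
  Real.sq_sqrt (F2_nonneg Θ)


lemma l2norm_nonneg {ι : Type*} [Fintype ι] (x : ι → ℝ) : 0 ≤ l2norm x := Real.sqrt_nonneg _

lemma l2norm_eq_norm {ι : Type*} [Fintype ι] (x : ι → ℝ) :
    l2norm x = ‖(WithLp.equiv 2 (ι → ℝ)).symm x‖ := by
  rw [EuclideanSpace.norm_eq]
  simp [l2norm, Real.norm_eq_abs, sq_abs]

lemma mulVec_l2norm_le (M : Matrix (Fin m) (Fin m) ℝ) (x : Fin m → ℝ) :
    l2norm (M.mulVec x) ≤ sigmaMax M * l2norm x := by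
  rw [l2norm_eq_norm, l2norm_eq_norm]
  have h := (Matrix.toEuclideanCLM (𝕜 := ℝ) M).le_opNorm ((WithLp.equiv 2 (Fin m → ℝ)).symm x)
  rw [show (Matrix.toEuclideanCLM (𝕜 := ℝ) M) ((WithLp.equiv 2 (Fin m → ℝ)).symm x)
      = (WithLp.equiv 2 (Fin m → ℝ)).symm (Matrix.toLin' M x) from rfl] at h
  rw [Matrix.toLin'_apply] at h
  exact h

set_option synthInstance.maxHeartbeats 1000000 in
lemma sigmaMax_le_sqrt_sum (M : Matrix (Fin m) (Fin m) ℝ) :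
    sigmaMax M ≤ Real.sqrt (∑ k, ∑ l, M k l ^ 2) := by
  rw [sigmaMax]
  refine ContinuousLinearMap.opNorm_le_bound _ (Real.sqrt_nonneg _) fun y => ?_
  set x : Fin m → ℝ := WithLp.equiv 2 (Fin m → ℝ) y with hx
  have hy : y = (WithLp.equiv 2 (Fin m → ℝ)).symm x := rfl
  rw [hy, show (Matrix.toEuclideanCLM (𝕜 := ℝ) M) ((WithLp.equiv 2 (Fin m → ℝ)).symm x)
      = (WithLp.equiv 2 (Fin m → ℝ)).symm (Matrix.toLin' M x) from rfl, ← l2norm_eq_norm, ← l2norm_eq_norm,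
    Matrix.toLin'_apply]
  have hb : ∀ k, (M.mulVec x k) ^ 2 ≤ (∑ l, M k l ^ 2) * (∑ l, x l ^ 2) := by
    intro k
    exact Finset.sum_mul_sq_le_sq_mul_sq Finset.univ (fun l => M k l) x
  have h1 : ∑ k, (M.mulVec x k) ^ 2 ≤ (∑ k, ∑ l, M k l ^ 2) * (∑ l, x l ^ 2) := by
    rw [Finset.sum_mul]
    exact Finset.sum_le_sum fun k _ => hb k
  have := Real.sqrt_le_sqrt h1
  rw [l2norm, l2norm]
  refine le_trans this ?_
  rw [Real.sqrt_mul (Finset.sum_nonneg fun k _ => Finset.sum_nonneg fun l _ => sq_nonneg _ :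
    (0:ℝ) ≤ ∑ k, ∑ l, M k l ^ 2)]


lemma one_le_sigmaMax_mul (M : Matrix (Fin m) (Fin m) ℝ) (hm : 0 < m) (hdet : IsUnit M.det) :
    1 ≤ sigmaMax M⁻¹ * sigmaMax M := by
  haveI : NeZero m := ⟨hm.ne'⟩
  have h1 : (Matrix.toEuclideanCLM (𝕜 := ℝ) (M⁻¹ * M)) = 1 := by
    rw [Matrix.nonsing_inv_mul M hdet]
    exact map_one _
  have h2 : ‖Matrix.toEuclideanCLM (𝕜 := ℝ) (M⁻¹ * M)‖ = 1 := by
    rw [h1]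
    exact norm_one
  calc (1:ℝ) = ‖Matrix.toEuclideanCLM (𝕜 := ℝ) (M⁻¹ * M)‖ := h2.symm
    _ = ‖Matrix.toEuclideanCLM (𝕜 := ℝ) M⁻¹ * Matrix.toEuclideanCLM (𝕜 := ℝ) M‖ := by
        rw [_root_.map_mul]
    _ ≤ sigmaMax M⁻¹ * sigmaMax M := norm_mul_le _ _


lemma mem_posSupport (x : Fin n → ℝ) (i : Fin n) : i ∈ posSupport x ↔ 0 < x i := by
  simp [posSupport]
section LP
variable (c : Fin n → ℝ) (A : Matrix (Fin m) (Fin n) ℝ) (β : Fin m → Fin n)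

/-- the simplex multiplier vector -/
noncomputable def pvec : Fin m → ℝ := (((subCols A β)⁻¹)ᵀ).mulVec (c ∘ β)

lemma reducedCost_apply (i : Fin n) :
    reducedCost c A β i = c i - ∑ k, pvec c A β k * A k i := by
  simp only [reducedCost, Pi.sub_apply, pvec]
  congr 1
  rw [Matrix.mulVec]
  simp [dotProduct, Matrix.transpose_apply, mul_comm]

lemma pvec_eq_vecMul : pvec c A β = Matrix.vecMul (c ∘ β) (subCols A β)⁻¹ := by
  rw [pvec, Matrix.mulVec_transpose]

lemma reducedCost_basis (hdet : IsUnit (subCols A β).det) (k : Fin m) :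
    reducedCost c A β (β k) = 0 := by
  rw [reducedCost_apply, pvec_eq_vecMul]
  have : ∑ l, Matrix.vecMul (c ∘ β) (subCols A β)⁻¹ l * A l (β k)
      = Matrix.vecMul (Matrix.vecMul (c ∘ β) (subCols A β)⁻¹) (subCols A β) k := by
    simp [Matrix.vecMul, dotProduct, subCols]
  rw [this, Matrix.vecMul_vecMul, Matrix.nonsing_inv_mul _ hdet]
  simp

lemma obj_decomp (b : Fin m → ℝ) (y : Fin n → ℝ) (hy : Feasible A b y) :
    c ⬝ᵥ y = (reducedCost c A β) ⬝ᵥ y + pvec c A β ⬝ᵥ b := by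
  have h1 : (reducedCost c A β) ⬝ᵥ y = c ⬝ᵥ y - ((Aᵀ).mulVec (pvec c A β)) ⬝ᵥ y := by
    simp [reducedCost, pvec, sub_dotProduct]
  have h2 : ((Aᵀ).mulVec (pvec c A β)) ⬝ᵥ y = pvec c A β ⬝ᵥ b := by
    rw [Matrix.mulVec_transpose, ← Matrix.dotProduct_mulVec, hy.1]
  rw [h1, h2]; ring

end LP

section Unique
variable [NeZero n]

lemma enumOf_eq (B : Finset (Fin n)) (h : B.card = m) :
    (enumOf B : Fin m → Fin n) = B.orderEmbOfFin h := by
  rw [enumOf, dif_pos h]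

lemma enumOf_injective (B : Finset (Fin n)) (h : B.card = m) :
    Function.Injective (enumOf (m := m) B) := by
  rw [enumOf_eq B h]; exact (B.orderEmbOfFin h).injective

lemma enumOf_mem (B : Finset (Fin n)) (h : B.card = m) (k : Fin m) :
    enumOf B k ∈ B := by
  rw [enumOf_eq B h]; exact B.orderEmbOfFin_mem h k

lemma enumOf_surj (B : Finset (Fin n)) (h : B.card = m) {i : Fin n} (hi : i ∈ B) :
    ∃ k : Fin m, enumOf B k = i := by
  rw [enumOf_eq B h]
  have : i ∈ Set.range (B.orderEmbOfFin h) := by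
    rw [Finset.range_orderEmbOfFin]; exact hi
  exact this

lemma image_enumOf (B : Finset (Fin n)) (h : B.card = m) :
    Finset.univ.image (enumOf (m := m) B) = B := by
  ext i
  simp only [Finset.mem_image, Finset.mem_univ, true_and]
  constructor
  · rintro ⟨k, rfl⟩; exact enumOf_mem B h k
  · exact fun hi => enumOf_surj B h hi

lemma mulVec_support (A : Matrix (Fin m) (Fin n) ℝ) (B : Finset (Fin n)) (h : B.card = m)
    (v : Fin n → ℝ) (hv : ∀ i ∉ B, v i = 0) :
    A.mulVec v = (subCols A (enumOf B)).mulVec (v ∘ enumOf B) := by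
  set β := enumOf (m := m) B with hβ
  funext k
  rw [Matrix.mulVec, Matrix.mulVec]
  simp only [dotProduct, subCols, Matrix.submatrix_apply, id_eq, Function.comp_apply]
  rw [← Finset.sum_subset (Finset.subset_univ B) (fun i _ hi => by rw [hv i hi, mul_zero])]
  have himg : B = Finset.univ.image β := (image_enumOf B h).symm
  rw [himg, Finset.sum_image (fun a _ b _ hab => enumOf_injective B h hab)]

/-- Key LP lemma: positive reduced costs at a nondegenerate BFS imply unique optimality. -/
lemma unique_opt (c : Fin n → ℝ) (A : Matrix (Fin m) (Fin n) ℝ) (b : Fin m → ℝ)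
    (xs : Fin n → ℝ) (hfeas : Feasible A b xs) (hcard : (posSupport xs).card = m)
    (hdet : IsUnit (subCols A (enumOf (posSupport xs))).det)
    (hrc : ∀ i ∉ posSupport xs, 0 < reducedCost c A (enumOf (posSupport xs)) i) :
    ∀ y, Feasible A b y → c ⬝ᵥ xs ≤ c ⬝ᵥ y ∧ (c ⬝ᵥ y ≤ c ⬝ᵥ xs → y = xs) := by
  set B := posSupport xs with hB
  set β := enumOf (m := m) B with hβ
  have hxs0 : ∀ i ∉ B, xs i = 0 := fun i hi =>
    le_antisymm (not_lt.1 fun h => hi ((mem_posSupport xs i).2 h)) (hfeas.2 i)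
  have hrc0 : ∀ i ∈ B, reducedCost c A β i = 0 := by
    intro i hi
    obtain ⟨k, rfl⟩ := enumOf_surj B hcard hi
    exact reducedCost_basis c A β hdet k
  have hrcxs : reducedCost c A β ⬝ᵥ xs = 0 := by
    rw [dotProduct]
    refine Finset.sum_eq_zero fun i _ => ?_
    by_cases hi : i ∈ B
    · rw [hrc0 i hi, zero_mul]
    · rw [hxs0 i hi, mul_zero]
  intro y hy
  have hterm : ∀ i, 0 ≤ reducedCost c A β i * y i := by
    intro i
    by_cases hi : i ∈ B
    · rw [hrc0 i hi, zero_mul]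
    · exact mul_nonneg (hrc i hi).le (hy.2 i)
  have hrcy : 0 ≤ reducedCost c A β ⬝ᵥ y :=
    Finset.sum_nonneg fun i _ => hterm i
  have hobj : c ⬝ᵥ y - c ⬝ᵥ xs = reducedCost c A β ⬝ᵥ y := by
    rw [obj_decomp c A β b y hy, obj_decomp c A β b xs hfeas, hrcxs]; ring
  constructor
  · linarith
  · intro hle
    have hzero : reducedCost c A β ⬝ᵥ y = 0 := le_antisymm (by linarith) hrcy
    have hy0 : ∀ i ∉ B, y i = 0 := by
      intro i hi
      have := (Finset.sum_eq_zero_iff_of_nonneg (fun i _ => hterm i)).1 hzero i (Finset.mem_univ i)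
      rcases mul_eq_zero.1 this with h | h
      · exact absurd h (hrc i hi).ne'
      · exact h
    have hyv : (subCols A β).mulVec (y ∘ β) = b := by
      rw [← mulVec_support A B hcard y hy0]; exact hy.1
    have hxv : (subCols A β).mulVec (xs ∘ β) = b := by
      rw [← mulVec_support A B hcard xs hxs0]; exact hfeas.1
    have hinv : ∀ v : Fin m → ℝ, (subCols A β)⁻¹.mulVec ((subCols A β).mulVec v) = v := by
      intro v
      rw [Matrix.mulVec_mulVec, Matrix.nonsing_inv_mul _ hdet, Matrix.one_mulVec]
    have hcomp : y ∘ β = xs ∘ β := by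
      rw [← hinv (y ∘ β), ← hinv (xs ∘ β), hyv, hxv]
    funext i
    by_cases hi : i ∈ B
    · obtain ⟨k, rfl⟩ := enumOf_surj B hcard hi
      exact congrFun hcomp k
    · rw [hy0 i hi, hxs0 i hi]

end Unique

section PercW
variable (D : Samp n m d) (β : Fin m → Fin n) (i : Fin n)

/-- the multiplier vector for the update matrix -/
noncomputable def wvec : Fin n → ℝ := fun i' =>
  if i' = i then 1
  else if h : ∃ k, β k = i' then
    -(((subCols (AOf D) β)⁻¹.mulVec (fun k => AOf D k i)) h.choose)
  else 0

lemma percW_apply (i' : Fin n) (j : Fin d) :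
    percW D β i i' j = wvec D β i i' * zOf D j := by
  simp only [percW, wvec, Matrix.of_apply]
  by_cases h1 : i' = i
  · simp [h1]
  · by_cases h2 : ∃ k, β k = i'
    · simp [h1, h2]
    · simp [h1, h2]

lemma wvec_self : wvec D β i i = 1 := by simp [wvec]

lemma wvec_basis (hinj : Function.Injective β) (hi : ∀ k, β k ≠ i) (k : Fin m) :
    wvec D β i (β k) = -(((subCols (AOf D) β)⁻¹.mulVec (fun l => AOf D l i)) k) := by
  have h2 : ∃ k', β k' = β k := ⟨k, rfl⟩
  have : h2.choose = k := hinj h2.choose_spec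
  simp only [wvec, if_neg (hi k), dif_pos h2, this]

lemma i_not_mem_image (hi : ∀ k, β k ≠ i) : i ∉ Finset.univ.image β := by
  simp only [Finset.mem_image, Finset.mem_univ, true_and, not_exists]
  exact fun k h => hi k h

lemma sum_wvec_mul (hinj : Function.Injective β) (hi : ∀ k, β k ≠ i) (g : Fin n → ℝ) :
    ∑ i', wvec D β i i' * g i'
      = g i - ∑ k, (((subCols (AOf D) β)⁻¹.mulVec (fun l => AOf D l i)) k) * g (β k) := by
  rw [← Finset.sum_subset (Finset.subset_univ (insert i (Finset.univ.image β)))]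
  · rw [Finset.sum_insert (i_not_mem_image β i hi), wvec_self, one_mul,
      Finset.sum_image (fun a _ b _ hab => hinj hab)]
    rw [Finset.sum_congr rfl (fun k _ => by rw [wvec_basis D β i hinj hi k])]
    simp only [neg_mul, Finset.sum_neg_distrib]
    ring
  · intro i' _ hi'
    simp only [Finset.mem_insert, Finset.mem_image, Finset.mem_univ, true_and] at hi'
    push_neg at hi'
    have : wvec D β i i' = 0 := by
      simp only [wvec, if_neg hi'.1]
      rw [dif_neg]
      rintro ⟨k, hk⟩; exact hi'.2 k hk
    rw [this, zero_mul]

lemma ip_percW (hinj : Function.Injective β) (hi : ∀ k, β k ≠ i) (Φ : Matrix (Fin n) (Fin d) ℝ) :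
    ip Φ (percW D β i) = reducedCost (Φ.mulVec (zOf D)) (AOf D) β i := by
  have hmv : ∀ i', (Φ.mulVec (zOf D)) i' = ∑ j, Φ i' j * zOf D j := fun i' => rfl
  have h1 : ip Φ (percW D β i) = ∑ i', wvec D β i i' * (Φ.mulVec (zOf D)) i' := by
    rw [ip]
    refine Finset.sum_congr rfl fun i' _ => ?_
    rw [hmv, Finset.mul_sum]
    refine Finset.sum_congr rfl fun j _ => ?_
    rw [percW_apply]; ring
  rw [h1, sum_wvec_mul D β i hinj hi, reducedCost_apply]
  congr 1
  have h2 : ∑ k, pvec (Φ.mulVec (zOf D)) (AOf D) β k * AOf D k i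
      = ((Φ.mulVec (zOf D)) ∘ β) ⬝ᵥ ((subCols (AOf D) β)⁻¹.mulVec (fun l => AOf D l i)) := by
    rw [Matrix.dotProduct_mulVec, ← pvec_eq_vecMul]
    rfl
  rw [h2, dotProduct]
  refine Finset.sum_congr rfl fun k _ => by rw [Function.comp_apply]; ring

end PercW

section PercW2
variable (D : Samp n m d) (β : Fin m → Fin n) (i : Fin n)

lemma sum_wvec_sq (hinj : Function.Injective β) (hi : ∀ k, β k ≠ i) :
    ∑ i', wvec D β i i' ^ 2
      = 1 + ∑ k, (((subCols (AOf D) β)⁻¹.mulVec (fun l => AOf D l i)) k) ^ 2 := by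
  rw [← Finset.sum_subset (Finset.subset_univ (insert i (Finset.univ.image β)))]
  · rw [Finset.sum_insert (i_not_mem_image β i hi), wvec_self,
      Finset.sum_image (fun a _ b _ hab => hinj hab)]
    rw [Finset.sum_congr rfl (fun k _ => by rw [wvec_basis D β i hinj hi k])]
    simp [neg_pow]
  · intro i' _ hi'
    simp only [Finset.mem_insert, Finset.mem_image, Finset.mem_univ, true_and] at hi'
    push_neg at hi'
    have : wvec D β i i' = 0 := by
      simp only [wvec, if_neg hi'.1]
      rw [dif_neg]
      rintro ⟨k, hk⟩; exact hi'.2 k hk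
    rw [this]; ring

lemma F2_percW (hinj : Function.Injective β) (hi : ∀ k, β k ≠ i) :
    F2 (percW D β i)
      = (1 + ∑ k, (((subCols (AOf D) β)⁻¹.mulVec (fun l => AOf D l i)) k) ^ 2)
        * ∑ j, zOf D j ^ 2 := by
  rw [← sum_wvec_sq D β i hinj hi, F2, Finset.sum_mul]
  refine Finset.sum_congr rfl fun i' _ => ?_
  rw [Finset.mul_sum]
  refine Finset.sum_congr rfl fun j _ => ?_
  rw [percW_apply]; ring

lemma sum_sq_le_of_l2norm (z : Fin d → ℝ) (hz : l2norm z ≤ 1) : ∑ j, z j ^ 2 ≤ 1 := by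
  have h0 : 0 ≤ ∑ j, z j ^ 2 := Finset.sum_nonneg fun j _ => sq_nonneg _
  have hz' : Real.sqrt (∑ j, z j ^ 2) ≤ 1 := hz
  nlinarith [Real.sq_sqrt h0, Real.sqrt_nonneg (∑ j, z j ^ 2)]

lemma F2_percW_le (σb : ℝ) (hinj : Function.Injective β) (hi : ∀ k, β k ≠ i)
    (hσ : sigmaMax ((subCols (AOf D) β)⁻¹) ≤ σb)
    (hA : ∀ k, |AOf D k i| ≤ 1) (hz : l2norm (zOf D) ≤ 1) :
    F2 (percW D β i) ≤ 1 + σb ^ 2 * m := by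
  have hσ0 : 0 ≤ σb := le_trans (norm_nonneg _) hσ
  set v := (subCols (AOf D) β)⁻¹.mulVec (fun l => AOf D l i) with hv
  have ha : l2norm (fun l => AOf D l i) ≤ Real.sqrt m := by
    rw [l2norm]
    apply Real.sqrt_le_sqrt
    calc ∑ l : Fin m, AOf D l i ^ 2 ≤ ∑ _l : Fin m, (1:ℝ) := by
          refine Finset.sum_le_sum fun l _ => ?_
          have := hA l
          nlinarith [hA l, abs_nonneg (AOf D l i), sq_abs (AOf D l i)]
      _ = m := by simp
  have hvn : l2norm v ≤ σb * Real.sqrt m := by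
    refine le_trans (mulVec_l2norm_le _ _) ?_
    exact mul_le_mul hσ ha (l2norm_nonneg _) hσ0
  have hv2 : ∑ k, v k ^ 2 ≤ σb ^ 2 * m := by
    have h0 : 0 ≤ ∑ k, v k ^ 2 := Finset.sum_nonneg fun k _ => sq_nonneg _
    have hs : (l2norm v) ^ 2 = ∑ k, v k ^ 2 := Real.sq_sqrt h0
    have hm0 : (0:ℝ) ≤ m := Nat.cast_nonneg m
    nlinarith [Real.sq_sqrt hm0, Real.sqrt_nonneg (m:ℝ), l2norm_nonneg v]
  have hz2 : ∑ j, zOf D j ^ 2 ≤ 1 := sum_sq_le_of_l2norm _ hz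
  have hz0 : 0 ≤ ∑ j, zOf D j ^ 2 := Finset.sum_nonneg fun j _ => sq_nonneg _
  rw [F2_percW D β i hinj hi]
  have h1 : 0 ≤ 1 + ∑ k, v k ^ 2 := by positivity
  calc (1 + ∑ k, v k ^ 2) * ∑ j, zOf D j ^ 2 ≤ (1 + ∑ k, v k ^ 2) * 1 :=
        mul_le_mul_of_nonneg_left hz2 h1
    _ = 1 + ∑ k, v k ^ 2 := by ring
    _ ≤ 1 + σb ^ 2 * m := by linarith

end PercW2

def Good [NeZero n] (σb : ℝ) (Θs : Matrix (Fin n) (Fin d) ℝ) (D : Samp n m d)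
    (xs : Fin n → ℝ) : Prop :=
  Feasible (AOf D) (bOf D) xs ∧
  (posSupport xs).card = m ∧
  IsUnit (subCols (AOf D) (enumOf (posSupport xs))).det ∧
  sigmaMax ((subCols (AOf D) (enumOf (posSupport xs)))⁻¹) ≤ σb ∧
  (∀ k i, |AOf D k i| ≤ 1) ∧
  l2norm (zOf D) ≤ 1 ∧
  (∀ i ∉ posSupport xs, 1 ≤ reducedCost (Θs.mulVec (zOf D)) (AOf D) (enumOf (posSupport xs)) i)
section Inner
variable [NeZero n] (σb : ℝ) (Θs : Matrix (Fin n) (Fin d) ℝ) (D : Samp n m d)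
  (xs : Fin n → ℝ)

lemma inner_fold (hG : Good σb Θs D xs) (l : List (Fin n)) (Θ : Matrix (Fin n) (Fin d) ℝ) :
    ∃ u : ℕ,
      (ip Θs Θ + u ≤ ip Θs (l.foldl
        (fun Θtmp i =>
          if i ∉ posSupport xs ∧
              reducedCost (Θtmp.mulVec (zOf D)) (AOf D) (enumOf (posSupport xs)) i ≤ 1 / 2
          then Θtmp + percW D (enumOf (posSupport xs)) i
          else Θtmp) Θ)) ∧
      (F2 (l.foldl
        (fun Θtmp i =>
          if i ∉ posSupport xs ∧
              reducedCost (Θtmp.mulVec (zOf D)) (AOf D) (enumOf (posSupport xs)) i ≤ 1 / 2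
          then Θtmp + percW D (enumOf (posSupport xs)) i
          else Θtmp) Θ) ≤ F2 Θ + u * (2 + σb ^ 2 * m)) ∧
      (u = 0 → (l.foldl
        (fun Θtmp i =>
          if i ∉ posSupport xs ∧
              reducedCost (Θtmp.mulVec (zOf D)) (AOf D) (enumOf (posSupport xs)) i ≤ 1 / 2
          then Θtmp + percW D (enumOf (posSupport xs)) i
          else Θtmp) Θ) = Θ ∧
        ∀ i ∈ l, i ∉ posSupport xs →
          1 / 2 < reducedCost (Θ.mulVec (zOf D)) (AOf D) (enumOf (posSupport xs)) i) := by
  obtain ⟨hfeas, hcard, hdet, hσ, hA, hz, hsep⟩ := hG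
  set β := enumOf (m := m) (posSupport xs) with hβ
  have hinj : Function.Injective β := enumOf_injective _ hcard
  have hK : (0:ℝ) ≤ 2 + σb ^ 2 * m := by positivity
  induction l generalizing Θ with
  | nil => exact ⟨0, by simp, by simp, fun _ => ⟨rfl, by simp⟩⟩
  | cons i l ih =>
    rw [List.foldl_cons]
    by_cases hc : i ∉ posSupport xs ∧
        reducedCost (Θ.mulVec (zOf D)) (AOf D) β i ≤ 1 / 2
    · rw [if_pos hc]
      obtain ⟨hiB, hrc⟩ := hc
      have hβi : ∀ k, β k ≠ i := fun k h => hiB (h ▸ enumOf_mem _ hcard k)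
      obtain ⟨u, h1, h2, _⟩ := ih (Θ + percW D β i)
      refine ⟨u + 1, ?_, ?_, by omega⟩
      · have hsepi : 1 ≤ ip Θs (percW D β i) := by
          rw [ip_percW D β i hinj hβi]; exact hsep i hiB
        have : ip Θs (Θ + percW D β i) = ip Θs Θ + ip Θs (percW D β i) := ip_add_right ..
        push_cast
        linarith
      · have hipW : ip Θ (percW D β i) ≤ 1 / 2 := by
          rw [ip_percW D β i hinj hβi]; exact hrc
        have hFW : F2 (percW D β i) ≤ 1 + σb ^ 2 * m :=
          F2_percW_le D β i σb hinj hβi hσ (fun k => hA k i) hz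
        have hF : F2 (Θ + percW D β i) ≤ F2 Θ + (2 + σb ^ 2 * m) := by
          rw [F2_add]; linarith
        push_cast
        push_cast at h2
        linarith
    · rw [if_neg hc]
      obtain ⟨u, h1, h2, h3⟩ := ih Θ
      refine ⟨u, h1, h2, fun hu => ⟨(h3 hu).1, ?_⟩⟩
      intro i' hi' hiB'
      rcases List.mem_cons.1 hi' with rfl | hmem
      · push_neg at hc
        exact hc hiB'
      · exact (h3 hu).2 i' hmem hiB'

lemma inner_main (hG : Good σb Θs D xs) (Θ : Matrix (Fin n) (Fin d) ℝ) :
    ∃ u : ℕ,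
      (ip Θs Θ + u ≤ ip Θs (percInner D xs Θ)) ∧
      (F2 (percInner D xs Θ) ≤ F2 Θ + u * (2 + σb ^ 2 * m)) ∧
      (u = 0 → ∀ i ∉ posSupport xs,
        1 / 2 < reducedCost (Θ.mulVec (zOf D)) (AOf D) (enumOf (posSupport xs)) i) := by
  obtain ⟨u, h1, h2, h3⟩ := inner_fold σb Θs D xs hG (List.finRange n) Θ
  exact ⟨u, h1, h2, fun hu i hiB => (h3 hu).2 i (List.mem_finRange i) hiB⟩

end Inner

section Outer
variable [NeZero n] (σb : ℝ) (Θs : Matrix (Fin n) (Fin d) ℝ)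
  (xstar : Samp n m d → Fin n → ℝ) {T : ℕ} (Ds : Fin T → Samp n m d)
  (xsel : Fin T → Fin n → ℝ)

lemma main_det (hGood : ∀ t : Fin T, Good σb Θs (Ds t) (xstar (Ds t)))
    (hsel : ∀ t : Fin T, IsOptimal ((percIter xstar Ds t.1).mulVec (zOf (Ds t)))
      (AOf (Ds t)) (bOf (Ds t)) (xsel t)) (t : ℕ) :
    ∃ u : ℕ,
      ((u : ℝ) ≤ ip Θs (percIter xstar Ds t)) ∧
      (F2 (percIter xstar Ds t) ≤ u * (2 + σb ^ 2 * m)) ∧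
      ((Finset.univ.filter (fun s : Fin T => xstar (Ds s) ≠ xsel s ∧ s.1 < t)).card ≤ u) := by
  induction t with
  | zero =>
    refine ⟨0, by simp [percIter, ip], by simp [percIter, F2], ?_⟩
    simp
  | succ t ih =>
    obtain ⟨u, h1, h2, h3⟩ := ih
    by_cases ht : t < T
    · have hstep : percIter xstar Ds (t + 1)
          = percInner (Ds ⟨t, ht⟩) (xstar (Ds ⟨t, ht⟩)) (percIter xstar Ds t) := by
        rw [percIter, dif_pos ht]
      obtain ⟨u', g1, g2, g3⟩ := inner_main σb Θs (Ds ⟨t, ht⟩) (xstar (Ds ⟨t, ht⟩))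
        (hGood ⟨t, ht⟩) (percIter xstar Ds t)
      by_cases hmist : xstar (Ds ⟨t, ht⟩) = xsel ⟨t, ht⟩
      · -- no mistake at step t; the filter can only grow by the non-mistake index
        refine ⟨u + u', ?_, ?_, ?_⟩
        · push_cast; rw [hstep]; linarith
        · push_cast; rw [hstep]
          have hK : (0:ℝ) ≤ 2 + σb ^ 2 * m := by positivity
          nlinarith
        · refine le_trans (Finset.card_le_card ?_) (le_trans h3 (Nat.le_add_right u u'))
          intro s hs
          simp only [Finset.mem_filter, Finset.mem_univ, true_and] at hs ⊢
          refine ⟨hs.1, ?_⟩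
          rcases Nat.lt_succ_iff_lt_or_eq.1 hs.2 with h | h
          · exact h
          · exfalso
            have : s = ⟨t, ht⟩ := Fin.ext h
            rw [this] at hs
            exact hs.1 hmist
      · -- mistake at t: show an update must occur, i.e. u' ≥ 1
        have hu' : 1 ≤ u' := by
          by_contra hu0
          have hu0 : u' = 0 := by omega
          have hrc := g3 hu0
          have hGt := hGood ⟨t, ht⟩
          obtain ⟨hfeas, hcard, hdet, -, -, -, -⟩ := hGt
          have huniq := unique_opt ((percIter xstar Ds t).mulVec (zOf (Ds ⟨t, ht⟩)))
            (AOf (Ds ⟨t, ht⟩)) (bOf (Ds ⟨t, ht⟩)) (xstar (Ds ⟨t, ht⟩)) hfeas hcard hdet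
            (fun i hi => lt_trans (by norm_num) (hrc i hi))
          have hselt := hsel ⟨t, ht⟩
          have h := huniq (xsel ⟨t, ht⟩) hselt.1
          have hle := hselt.2 (xstar (Ds ⟨t, ht⟩)) hfeas
          exact hmist ((h.2 hle).symm)
        refine ⟨u + u', ?_, ?_, ?_⟩
        · push_cast; rw [hstep]; linarith
        · push_cast; rw [hstep]
          have hK : (0:ℝ) ≤ 2 + σb ^ 2 * m := by positivity
          nlinarith
        · refine le_trans (Finset.card_le_card
            (?_ : _ ⊆ insert (⟨t, ht⟩ : Fin T)
              (Finset.univ.filter (fun s : Fin T => xstar (Ds s) ≠ xsel s ∧ s.1 < t)))) ?_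
          · intro s hs
            simp only [Finset.mem_filter, Finset.mem_univ, true_and, Finset.mem_insert] at hs ⊢
            rcases Nat.lt_succ_iff_lt_or_eq.1 hs.2 with h | h
            · exact Or.inr ⟨hs.1, h⟩
            · exact Or.inl (Fin.ext h)
          · calc _ ≤ (Finset.univ.filter
                (fun s : Fin T => xstar (Ds s) ≠ xsel s ∧ s.1 < t)).card + 1 :=
                  Finset.card_insert_le _ _
              _ ≤ u + u' := by omega
    · have hstep : percIter xstar Ds (t + 1) = percIter xstar Ds t := by
        rw [percIter, dif_neg ht]
      refine ⟨u, by rw [hstep]; exact h1, by rw [hstep]; exact h2, ?_⟩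
      refine le_trans (Finset.card_le_card ?_) h3
      intro s hs
      simp only [Finset.mem_filter, Finset.mem_univ, true_and] at hs ⊢
      exact ⟨hs.1, lt_of_lt_of_le s.2 (Nat.le_of_not_lt ht)⟩

end Outer

lemma not_boundedD_of_m_eq_zero [NeZero n] (hm : m = 0) (σb : ℝ) (D : Samp n m d)
    (xs : Fin n → ℝ) : ¬ BoundedD σb D xs := by
  intro hB
  have hfeas : Feasible (AOf D) (bOf D) (fun _ => 2) := by
    constructor
    · funext k
      exact absurd k.isLt (by omega)
    · intro i; norm_num
  have hle := hB.2.2.2.2.2 _ hfeas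
  have hsum : ∑ _i : Fin n, (2:ℝ) ^ 2 = 4 * n := by
    simp [Finset.sum_const]
    ring
  have hn1 : (1:ℝ) ≤ n := by
    have := Nat.pos_of_ne_zero (NeZero.ne n)
    exact_mod_cast this
  have h4 : (4:ℝ) ≤ ∑ _i : Fin n, (2:ℝ) ^ 2 := by rw [hsum]; linarith
  have : (2:ℝ) ≤ l2norm (fun _ : Fin n => (2:ℝ)) := by
    rw [l2norm]
    have := Real.sqrt_le_sqrt h4
    rw [show (4:ℝ) = 2^2 by norm_num, Real.sqrt_sq (by norm_num : (0:ℝ) ≤ 2)] at this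
    exact this
  linarith

lemma one_le_sigb_mul_m [NeZero n] (σb : ℝ) (Θs : Matrix (Fin n) (Fin d) ℝ)
    (D : Samp n m d) (xs : Fin n → ℝ) (hG : Good σb Θs D xs) (hm : 0 < m) :
    1 ≤ σb * m := by
  obtain ⟨-, hcard, hdet, hσ, hA, -, -⟩ := hG
  set M := subCols (AOf D) (enumOf (posSupport xs)) with hM
  have h1 : 1 ≤ sigmaMax M⁻¹ * sigmaMax M := one_le_sigmaMax_mul M hm hdet
  have h2 : sigmaMax M ≤ m := by
    refine le_trans (sigmaMax_le_sqrt_sum M) ?_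
    have hsum : ∑ k, ∑ l, M k l ^ 2 ≤ (m : ℝ) * m := by
      calc ∑ k, ∑ l, M k l ^ 2 ≤ ∑ _k : Fin m, ∑ _l : Fin m, (1:ℝ) := by
            refine Finset.sum_le_sum fun k _ => Finset.sum_le_sum fun l _ => ?_
            have h := hA k (enumOf (posSupport xs) l)
            have hMe : M k l = AOf D k (enumOf (posSupport xs) l) := rfl
            rw [hMe]
            nlinarith [abs_nonneg (AOf D k (enumOf (posSupport xs) l)),
              sq_abs (AOf D k (enumOf (posSupport xs) l))]
        _ = (m : ℝ) * m := by simp [Finset.sum_const]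
    refine le_trans (Real.sqrt_le_sqrt hsum) ?_
    rw [show (m:ℝ) * m = (m:ℝ)^2 by ring, Real.sqrt_sq (Nat.cast_nonneg m)]
  have h3 : 0 ≤ sigmaMax M⁻¹ := norm_nonneg _
  have h4 : 0 ≤ sigmaMax M := norm_nonneg _
  calc (1:ℝ) ≤ sigmaMax M⁻¹ * sigmaMax M := h1
    _ ≤ σb * m := mul_le_mul hσ h2 h4 (le_trans h3 hσ)



/-- mistake bound of the optimality-driven perceptron:
    #{t : x*_t ≠ x_t} ≤ Θ̄² + σ̄²Θ̄²m²n, independently of T. -/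
theorem perceptron_mistake_bound
    [NeZero n]
    (P : Measure (Samp n m d)) [IsProbabilityMeasure P]
    (xstar : Samp n m d → Fin n → ℝ)
    (σb Θb : ℝ)
    (h_nondeg : ∀ᵐ D ∂P, Nondeg D (xstar D))
    (h_bdd : ∀ᵐ D ∂P, BoundedD σb D (xstar D))
    (h_sep : ∃ Θs : Matrix (Fin n) (Fin d) ℝ, frob Θs ≤ Θb ∧
      ∀ᵐ D ∂P, ∀ i ∉ posSupport (xstar D),
        1 ≤ reducedCost (Θs.mulVec (zOf D)) (AOf D) (enumOf (posSupport (xstar D))) i)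
    (T : ℕ)
    (xsel : (Fin T → Samp n m d) → Fin T → Fin n → ℝ)
    (h_xsel : ∀ᵐ Ds ∂(Measure.pi fun _ : Fin T => P), ∀ t : Fin T,
      IsOptimal ((percIter xstar Ds t.1).mulVec (zOf (Ds t)))
        (AOf (Ds t)) (bOf (Ds t)) (xsel Ds t)) :
    ∀ᵐ Ds ∂(Measure.pi fun _ : Fin T => P),
      ((Finset.univ.filter (fun t : Fin T => xstar (Ds t) ≠ xsel Ds t)).card : ℝ) ≤
        Θb ^ 2 + σb ^ 2 * Θb ^ 2 * m ^ 2 * n := by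
  obtain ⟨Θs, hΘ, hsepae⟩ := h_sep
  have hΘ0 : (0:ℝ) ≤ Θb := le_trans (Real.sqrt_nonneg _) hΘ
  rcases Nat.eq_zero_or_pos m with hm | hm
  · obtain ⟨D, hD⟩ := h_bdd.exists
    exact absurd hD (not_boundedD_of_m_eq_zero hm σb D _)
  -- a.e., every sample is Good
  have hGae : ∀ᵐ D ∂P, Good σb Θs D (xstar D) := by
    filter_upwards [h_nondeg, h_bdd, hsepae] with D hN hB hS
    have hcard : (posSupport (xstar D)).card = m := hN.2.2.2
    exact ⟨hN.1.1, hcard, hN.2.2.1 _ (enumOf_injective _ hcard), hB.1, hB.2.2.1, hB.2.1, hS⟩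
  -- one Good sample exists (to get global numeric facts)
  obtain ⟨D₀, hG₀⟩ := hGae.exists
  have hσm : (1:ℝ) ≤ σb * m := one_le_sigb_mul_m σb Θs D₀ (xstar D₀) hG₀ hm
  have hσ0 : (0:ℝ) ≤ σb := le_trans (norm_nonneg _) hG₀.2.2.2.1
  have hmn : m ≤ n := by
    have := Finset.card_le_card (Finset.subset_univ (posSupport (xstar D₀)))
    rw [hG₀.2.1, Finset.card_univ, Fintype.card_fin] at this
    exact this
  -- transfer Goodness to the product measure
  have hall : ∀ᵐ Ds ∂(Measure.pi fun _ : Fin T => P), ∀ t : Fin T,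
      Good σb Θs (Ds t) (xstar (Ds t)) :=
    ae_all_iff.2 fun t =>
      (Measure.tendsto_eval_ae_ae (μ := fun _ : Fin T => P) (i := t)).eventually hGae
  filter_upwards [hall, h_xsel] with Ds hG hsel
  by_cases hnm : n = m
  · -- basis is everything: the predicted LP always has the true solution as unique optimum
    have hzero : (Finset.univ.filter (fun t : Fin T => xstar (Ds t) ≠ xsel Ds t)) = ∅ := by
      rw [Finset.filter_eq_empty_iff]
      intro t _
      simp only [ne_eq, not_not]
      have hGt := hG t
      have huniq := unique_opt ((percIter xstar Ds t.1).mulVec (zOf (Ds t)))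
        (AOf (Ds t)) (bOf (Ds t)) (xstar (Ds t)) hGt.1 hGt.2.1 hGt.2.2.1
        (fun i hi => by
          exfalso
          apply hi
          have : posSupport (xstar (Ds t)) = Finset.univ :=
            Finset.eq_univ_of_card _ (by rw [hGt.2.1, Fintype.card_fin, hnm])
          rw [this]; exact Finset.mem_univ i)
      have h := huniq (xsel Ds t) (hsel t).1
      exact ((h.2 ((hsel t).2 (xstar (Ds t)) hGt.1)).symm)
    rw [hzero]
    simp only [Finset.card_empty, Nat.cast_zero]
    positivity
  · have hmn' : (m:ℝ) + 1 ≤ n := by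
      have : m + 1 ≤ n := lt_of_le_of_ne hmn (fun h => hnm h.symm)
      exact_mod_cast this
    have hm1 : (1:ℝ) ≤ m := by exact_mod_cast hm
    obtain ⟨u, h1, h2, h3⟩ := main_det σb Θs xstar Ds (xsel Ds) hG hsel T
    have hcard : ((Finset.univ.filter (fun t : Fin T => xstar (Ds t) ≠ xsel Ds t)).card : ℝ)
        ≤ u := by
      have hsub : (Finset.univ.filter (fun t : Fin T => xstar (Ds t) ≠ xsel Ds t))
          ⊆ (Finset.univ.filter (fun s : Fin T => xstar (Ds s) ≠ xsel Ds s ∧ s.1 < T)) := by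
        intro s hs
        simp only [Finset.mem_filter, Finset.mem_univ, true_and] at hs ⊢
        exact ⟨hs, s.2⟩
      exact_mod_cast le_trans (Finset.card_le_card hsub) h3
    set K : ℝ := 2 + σb ^ 2 * m with hK
    have hK0 : (0:ℝ) ≤ K := by positivity
    have hFs : F2 Θs ≤ Θb ^ 2 := by
      rw [← frob_sq]
      exact pow_le_pow_left₀ (Real.sqrt_nonneg _) hΘ 2
    have hu2 : (u:ℝ) ^ 2 ≤ Θb ^ 2 * (u * K) := by
      have ha : (u:ℝ) ^ 2 ≤ (ip Θs (percIter xstar Ds T)) ^ 2 :=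
        pow_le_pow_left₀ (Nat.cast_nonneg u) h1 2
      have hb := ip_sq_le Θs (percIter xstar Ds T)
      have hc : F2 Θs * F2 (percIter xstar Ds T) ≤ Θb ^ 2 * (u * K) :=
        mul_le_mul hFs h2 (F2_nonneg _) (by positivity)
      linarith
    have hm2 : (1:ℝ) ≤ (m:ℝ) ^ 2 := by nlinarith
    have e1 : (1:ℝ) ≤ (σb * m) ^ 2 := by nlinarith
    have e3 : σb ^ 2 * (m:ℝ) ≤ (σb * m) ^ 2 * m := by
      nlinarith [mul_nonneg (mul_nonneg (sq_nonneg σb) (by linarith : (0:ℝ) ≤ (m:ℝ)))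
        (by linarith : (0:ℝ) ≤ (m:ℝ) ^ 2 - 1)]
    have e2 : (σb * m) ^ 2 * ((m:ℝ) + 1) ≤ (σb * m) ^ 2 * n :=
      mul_le_mul_of_nonneg_left hmn' (sq_nonneg _)
    have e4 : (σb * m) ^ 2 * ((m:ℝ) + 1) = (σb * m) ^ 2 * m + (σb * m) ^ 2 := by ring
    have e5 : (σb * m) ^ 2 * (n:ℝ) = σb ^ 2 * m ^ 2 * n := by ring
    have hkey : 1 + σb ^ 2 * m ≤ σb ^ 2 * m ^ 2 * n := by linarith
    have hub : (u:ℝ) ≤ Θb ^ 2 + σb ^ 2 * Θb ^ 2 * m ^ 2 * n := by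
      rcases Nat.eq_zero_or_pos u with hu | hu
      · rw [hu]; push_cast; positivity
      · have hu0 : (0:ℝ) < u := by exact_mod_cast hu
        have huK : (u:ℝ) ≤ Θb ^ 2 * K := by
          have ee1 : (u:ℝ) ^ 2 = u * u := by ring
          have ee2 : Θb ^ 2 * (u * K) = (Θb ^ 2 * K) * u := by ring
          exact le_of_mul_le_mul_right (by linarith) hu0
        have hfin : Θb ^ 2 * K ≤ Θb ^ 2 + σb ^ 2 * Θb ^ 2 * m ^ 2 * n := by
          have f1 := mul_le_mul_of_nonneg_left hkey (sq_nonneg Θb)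
          have f3 : Θb ^ 2 * K = 2 * Θb ^ 2 + Θb ^ 2 * (σb ^ 2 * (m:ℝ)) := by rw [hK]; ring
          have f4 : Θb ^ 2 * (1 + σb ^ 2 * m) = Θb ^ 2 + Θb ^ 2 * (σb ^ 2 * (m:ℝ)) := by ring
          have f5 : Θb ^ 2 * (σb ^ 2 * m ^ 2 * n) = σb ^ 2 * Θb ^ 2 * m ^ 2 * n := by ring
          linarith [f1, f3, f4, f5]
        linarith
    linarith


end MOMPaper
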